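/- Assume T is non-constant and k < 0. Let m be the smallest index with T_m = min_i T_i and M the largest index with T_M = max_i T_i, and for i ≠ m set a_{im} = (T_i − T_m)/(e^{k t_i} − e^{k t_m}), for j ≠ M set a_{jM} = (T_j − T_M)/(e^{k t_j} − e^{k t_M}). Then: a_{im} > 0 for every i < m; a_{im} ≤ 0 for every i > m; a_{jM} > 0 for every j > M; and a_{jM} ≤ 0 for every j < M. -/
import Mathlib


/-- For non-constant `T` and `k < 0`, with `m` the smallest index
where `T` attains its minimum and `M` the largest index where `T` attains its
maximum, the interpolation coefficients satisfy: `a_{im} > 0` for `i < m`,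
`a_{im} ≤ 0` for `i > m`, `a_{jM} > 0` for `j > M`, and `a_{jM} ≤ 0` for
`j < M`. -/
theorem interpolation_coefficients_signs {n : ℕ}
    (t : Fin n → ℝ) (ht : StrictMono t) (T : Fin n → ℝ)
    (hnc : ∃ i j : Fin n, T i ≠ T j)
    (k : ℝ) (hk : k < 0)
    (m M : Fin n)
    (hm_min : ∀ i, T m ≤ T i) (hm_first : ∀ i, T i = T m → m ≤ i)
    (hM_max : ∀ i, T i ≤ T M) (hM_last : ∀ i, T i = T M → i ≤ M) :
    (∀ i, i < m →
      0 < (T i - T m) / (Real.exp (k * t i) - Real.exp (k * t m))) ∧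
    (∀ i, m < i →
      (T i - T m) / (Real.exp (k * t i) - Real.exp (k * t m)) ≤ 0) ∧
    (∀ j, M < j →
      0 < (T j - T M) / (Real.exp (k * t j) - Real.exp (k * t M))) ∧
    (∀ j, j < M →
      (T j - T M) / (Real.exp (k * t j) - Real.exp (k * t M)) ≤ 0) := by
  have hexp : ∀ i j : Fin n, i < j →
      Real.exp (k * t j) < Real.exp (k * t i) := by
    intro i j hij
    exact Real.exp_lt_exp.2 (by nlinarith [ht hij])
  refine ⟨?_, ?_, ?_, ?_⟩
  · intro i hi
    have hden : 0 < Real.exp (k * t i) - Real.exp (k * t m) :=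
      sub_pos.2 (hexp i m hi)
    have hnum : 0 < T i - T m := by
      rcases lt_or_eq_of_le (hm_min i) with h | h
      · linarith
      · exact absurd (hm_first i h.symm) (not_le.2 hi)
    positivity
  · intro i hi
    have hden : Real.exp (k * t i) - Real.exp (k * t m) < 0 :=
      sub_neg.2 (hexp m i hi)
    exact div_nonpos_of_nonneg_of_nonpos (by linarith [hm_min i]) hden.le
  · intro j hj
    have hden : Real.exp (k * t j) - Real.exp (k * t M) < 0 :=
      sub_neg.2 (hexp M j hj)
    have hnum : T j - T M < 0 := by
      rcases lt_or_eq_of_le (hM_max j) with h | h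
      · linarith
      · exact absurd (hM_last j h) (not_le.2 hj)
    exact div_pos_of_neg_of_neg hnum hden
  · intro j hj
    have hden : 0 < Real.exp (k * t j) - Real.exp (k * t M) :=
      sub_pos.2 (hexp j M hj)
    exact div_nonpos_of_nonpos_of_nonneg (by linarith [hM_max j]) hden.le
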